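/- arXiv:1404.4079 — 2 statements merged into one kernel-verified Lean document; each statement's English description precedes it below -/
import Mathlib

section
/- (Tchakaloff) Let μ be a finite, positive, Borel measure on ℝ^q with compact support Z ⊂ ℝ^q, and let d ≥ 1 be a fixed positive integer. Then there exist p ≤ binomial(q + d, q) points z_1, …, z_p ∈ Z and positive weights w_1, …, w_p such that ∫ f dμ = Σ_{k=1}^{p} w_k f(z_k) for every polynomial f ∈ ℝ[z_1, …, z_q] of total degree at most d. -/
open MeasureTheory Set

variable {q d : ℕ}

private noncomputable def tchakSym (m : {m : Fin q →₀ ℕ // (m.sum fun _ e => e) ≤ d}) :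
    Sym (Option (Fin q)) d :=
  ⟨(m.1.toMultiset.map some) + Multiset.replicate (d - (m.1.sum fun _ e => e)) none, by
    simp [Finsupp.card_toMultiset]
    exact Nat.add_sub_cancel' m.2⟩

private lemma tchakSym_inj :
    Function.Injective (tchakSym (q := q) (d := d)) := by
  intro m₁ m₂ h
  apply Subtype.ext
  ext i
  have := congrArg (Multiset.count (some i)) (congrArg Subtype.val h)
  simpa [tchakSym, Multiset.count_replicate,
    Multiset.count_map_eq_count' _ _ (Option.some_injective _),
    Finsupp.count_toMultiset] using this

private instance : Finite {m : Fin q →₀ ℕ // (m.sum fun _ e => e) ≤ d} :=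
  Finite.of_injective _ tchakSym_inj

private noncomputable instance : Fintype {m : Fin q →₀ ℕ // (m.sum fun _ e => e) ≤ d} :=
  Fintype.ofFinite _

private lemma tchak_card_le :
    Fintype.card {m : Fin q →₀ ℕ // (m.sum fun _ e => e) ≤ d} ≤ (q + d).choose q := by
  have h1 := Fintype.card_le_of_injective _ (tchakSym_inj (q := q) (d := d))
  rw [Sym.card_sym_eq_multichoose, Nat.multichoose_eq] at h1
  have : Fintype.card (Option (Fin q)) + d - 1 = q + d := by
    simp [Nat.add_right_comm]
  rw [this] at h1
  rwa [← Nat.choose_symm_add (a := q) (b := d)] at h1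

private lemma tchak_pad_sum {M : Type*} [AddCommMonoid M] {m n : ℕ} (h : m ≤ n) (f : ℕ → M)
    (hf : ∀ j, m ≤ j → f j = 0) : ∑ j : Fin n, f j = ∑ j : Fin m, f j := by
  rw [Fin.sum_univ_eq_sum_range, Fin.sum_univ_eq_sum_range]
  exact (Finset.sum_subset (Finset.range_subset_range.2 h)
    fun j _ hj => hf j (le_of_not_gt (by simpa using hj))).symm

private lemma tchak_isCompact_convexHull {V : Type*} [NormedAddCommGroup V] [NormedSpace ℝ V]
    [FiniteDimensional ℝ V] {S : Set V} (hS : IsCompact S) : IsCompact (convexHull ℝ S) := by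
  rcases S.eq_empty_or_nonempty with rfl | ⟨s₀, hs₀⟩
  · simp
  set n := Module.finrank ℝ V + 1 with hn
  have hA : IsCompact ((stdSimplex ℝ (Fin n)) ×ˢ (Set.univ.pi fun _ : Fin n => S)) :=
    (isCompact_stdSimplex (𝕜 := ℝ) (ι := Fin n)).prod (isCompact_univ_pi fun _ => hS)
  have hg : Continuous fun p : (Fin n → ℝ) × (Fin n → V) => ∑ i, p.1 i • p.2 i :=
    continuous_finset_sum _ fun i _ =>
      ((continuous_apply i).comp continuous_fst).smul ((continuous_apply i).comp continuous_snd)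
  have himg : convexHull ℝ S = (fun p : (Fin n → ℝ) × (Fin n → V) => ∑ i, p.1 i • p.2 i) ''
      ((stdSimplex ℝ (Fin n)) ×ˢ (Set.univ.pi fun _ => S)) := by
    apply Subset.antisymm
    · intro x hx
      obtain ⟨ι, hfin, y, w, hrange, hAI, hpos, hsum1, hcomb⟩ :=
        eq_pos_convex_span_of_mem_convexHull hx
      have hcard : Fintype.card ι ≤ n :=
        hAI.card_le_finrank_succ.trans (add_le_add_left (Submodule.finrank_le _) 1)
      set m := Fintype.card ι with hm
      let e := (Fintype.equivFin ι).symm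
      set W : ℕ → ℝ := fun j => if h : j < m then w (e ⟨j, h⟩) else 0 with hW
      set P : ℕ → V := fun j => if h : j < m then y (e ⟨j, h⟩) else s₀ with hP
      have hWm : ∀ j : Fin m, W j = w (e j) := fun j => by
        simp only [hW, dif_pos j.2, Fin.eta]
      have hPm : ∀ j : Fin m, P j = y (e j) := fun j => by
        simp only [hP, dif_pos j.2, Fin.eta]
      refine ⟨(fun j : Fin n => W j, fun j : Fin n => P j), ⟨⟨fun j => ?_, ?_⟩, fun j _ => ?_⟩, ?_⟩
      · simp only [hW]
        split
        · exact (hpos _).le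
        · exact le_refl _
      · calc ∑ j : Fin n, W j = ∑ j : Fin m, W j :=
              tchak_pad_sum hcard W fun j hj => dif_neg (not_lt.2 hj)
          _ = ∑ j : Fin m, w (e j) := Finset.sum_congr rfl fun j _ => hWm j
          _ = 1 := by rw [Equiv.sum_comp e w]; exact hsum1
      · simp only [hP]
        split
        · exact hrange (mem_range_self _)
        · exact hs₀
      · calc ∑ j : Fin n, W j • P j = ∑ j : Fin m, W j • P j :=
              tchak_pad_sum hcard (fun j => W j • P j)
                fun j hj => by rw [hW, hP]; dsimp only; rw [dif_neg (not_lt.2 hj), zero_smul]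
          _ = ∑ j : Fin m, w (e j) • y (e j) :=
              Finset.sum_congr rfl fun j _ => by rw [hWm j, hPm j]
          _ = x := by rw [Equiv.sum_comp e fun i => w i • y i]; exact hcomb
    · rintro x ⟨⟨w, z⟩, ⟨hw, hz⟩, rfl⟩
      exact (convex_convexHull ℝ S).sum_mem (fun i _ => hw.1 i) hw.2
        (fun i _ => subset_convexHull ℝ S (hz i (mem_univ i)))
  rw [himg]
  exact hA.image hg

/-- **Tchakaloff.** Let `μ` be a finite positive Borel measure with
compact support `Z ⊂ ℝ^q` and let `d ≥ 1`. Then there exist `p ≤ binom(q+d, q)`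
points `z_k ∈ Z` and positive weights `w_k` such that
`∫ f dμ = Σ_k w_k f(z_k)` for every polynomial `f` of total degree at most `d`. -/
theorem stmt3 {q : ℕ} (μ : Measure (EuclideanSpace ℝ (Fin q))) [IsFiniteMeasure μ]
    (Z : Set (EuclideanSpace ℝ (Fin q))) (hZ : IsCompact Z) (hsupp : μ Zᶜ = 0)
    (d : ℕ) (hd : 1 ≤ d) :
    ∃ p : ℕ, p ≤ (q + d).choose q ∧
      ∃ (z : Fin p → EuclideanSpace ℝ (Fin q)) (w : Fin p → ℝ),
        (∀ k, z k ∈ Z) ∧ (∀ k, 0 < w k) ∧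
        ∀ f : MvPolynomial (Fin q) ℝ, f.totalDegree ≤ d →
          ∫ v, MvPolynomial.eval (fun i => v i) f ∂μ =
            ∑ k, w k * MvPolynomial.eval (fun i => z k i) f := by
  classical
  by_cases hμ0 : μ = 0
  · exact ⟨0, Nat.zero_le _, Fin.elim0, Fin.elim0, fun k => k.elim0, fun k => k.elim0,
      fun f _ => by simp [hμ0]⟩
  haveI : NeZero μ := ⟨hμ0⟩
  set σ := {m : Fin q →₀ ℕ // (m.sum fun _ e => e) ≤ d} with hσ
  set φ : EuclideanSpace ℝ (Fin q) → (σ → ℝ) :=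
    fun v m => m.1.prod fun i e => v i ^ e with hφ
  have hφc : Continuous φ := by
    refine continuous_pi fun m => ?_
    simp only [hφ, Finsupp.prod]
    exact continuous_finset_prod _ fun i _ => ((EuclideanSpace.proj i).continuous).pow _
  have hae : ∀ᵐ v ∂μ, v ∈ Z := by
    rw [MeasureTheory.ae_iff]
    simpa [Set.compl_def] using hsupp
  have hint : Integrable φ μ := by
    obtain ⟨C, hC⟩ := hZ.exists_bound_of_continuousOn hφc.continuousOn
    exact ⟨hφc.aestronglyMeasurable,
      HasFiniteIntegral.of_bounded (C := C) (hae.mono fun v hv => hC v hv)⟩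
  set S := φ '' Z with hS
  have hSc : IsCompact S := hZ.image hφc
  have hK : IsCompact (convexHull ℝ S) := tchak_isCompact_convexHull hSc
  have havg : (⨍ v, φ v ∂μ) ∈ convexHull ℝ S :=
    (convex_convexHull ℝ S).average_mem hK.isClosed
      (hae.mono fun v hv => subset_convexHull ℝ S ⟨v, hv, rfl⟩) hint
  obtain ⟨ι, hfin, y, lam, hrange, hAI, hpos, hsum1, hcomb⟩ :=
    eq_pos_convex_span_of_mem_convexHull havg
  -- the constant monomial
  have hm₀ : ((0 : Fin q →₀ ℕ).sum fun _ e => e) ≤ d := by simp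
  set m₀ : σ := ⟨0, hm₀⟩ with hm₀'
  have hy1 : ∀ i, y i m₀ = 1 := by
    intro i
    obtain ⟨v, hv, hyv⟩ := hrange (mem_range_self i)
    rw [← hyv]
    simp [hφ, hm₀']
  -- cardinality bound
  set L : (σ → ℝ) →ₗ[ℝ] ℝ := LinearMap.proj m₀ with hL
  have hker : vectorSpan ℝ (Set.range y) ≤ LinearMap.ker L := by
    rw [vectorSpan_def, Submodule.span_le]
    rintro x hx
    rw [Set.mem_vsub] at hx
    obtain ⟨a, ⟨i, rfl⟩, b, ⟨j, rfl⟩, rfl⟩ := hx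
    simp [hL, LinearMap.mem_ker, hy1 i, hy1 j]
  have hktop : LinearMap.ker L < ⊤ := by
    rw [lt_top_iff_ne_top]
    intro htop
    have h1 : (fun _ : σ => (1 : ℝ)) ∈ LinearMap.ker L := htop ▸ Submodule.mem_top
    rw [LinearMap.mem_ker] at h1
    simp [hL] at h1
  have hcards : Fintype.card ι ≤ Fintype.card σ := by
    have h1 := hAI.card_le_finrank_succ
    have h2 : Module.finrank ℝ (vectorSpan ℝ (Set.range y)) ≤
        Module.finrank ℝ (LinearMap.ker L) := Submodule.finrank_mono hker
    have h3 : Module.finrank ℝ (LinearMap.ker L) < Module.finrank ℝ (σ → ℝ) :=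
      Submodule.finrank_lt hktop.ne
    have h4 : Module.finrank ℝ (σ → ℝ) = Fintype.card σ := Module.finrank_pi ℝ
    omega
  have hcard : Fintype.card ι ≤ (q + d).choose q := hcards.trans tchak_card_le
  -- weights
  set c : ℝ := (μ Set.univ).toReal with hc'
  have hc : 0 < c :=
    ENNReal.toReal_pos (NeZero.ne _) (measure_ne_top μ _)
  have hInt_eq : ∫ v, φ v ∂μ = ∑ i, (c * lam i) • y i := by
    calc ∫ v, φ v ∂μ = c • ⨍ v, φ v ∂μ := by
          rw [average_eq, smul_smul, show μ.real univ = c from rfl, mul_inv_cancel₀ hc.ne', one_smul]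
      _ = c • ∑ i, lam i • y i := by rw [← hcomb]
      _ = ∑ i, (c * lam i) • y i := by
          rw [Finset.smul_sum]
          exact Finset.sum_congr rfl fun i _ => smul_smul c (lam i) (y i)
  choose ζ hζZ hζφ using fun i => hrange (Set.mem_range_self (f := y) i)
  have hintm : ∀ m : σ, Integrable (fun v => φ v m) μ := fun m => by
    have := (ContinuousLinearMap.proj (R := ℝ) (φ := fun _ : σ => ℝ) m).integrable_comp hint
    simpa using this
  have hcoord : ∀ m : σ, ∫ v, φ v m ∂μ = ∑ i, (c * lam i) * φ (ζ i) m := by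
    intro m
    have h1 : ∫ v, φ v m ∂μ = (∫ v, φ v ∂μ) m := by
      have := (ContinuousLinearMap.proj (R := ℝ) (φ := fun _ : σ => ℝ) m).integral_comp_comm hint
      simpa using this
    rw [h1, hInt_eq]
    simp only [Finset.sum_apply, Pi.smul_apply, smul_eq_mul]
    exact Finset.sum_congr rfl fun i _ => by rw [hζφ i]
  set e := (Fintype.equivFin ι).symm with he
  refine ⟨Fintype.card ι, hcard, fun k => ζ (e k), fun k => c * lam (e k),
    fun k => hζZ (e k), fun k => mul_pos hc (hpos (e k)), fun f hf => ?_⟩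
  have hdeg : ∀ m ∈ f.support, (m.sum fun _ e => e) ≤ d := fun m hm =>
    le_trans (MvPolynomial.le_totalDegree hm) hf
  have key : ∀ v : EuclideanSpace ℝ (Fin q), MvPolynomial.eval (fun i => v i) f =
      ∑ m ∈ f.support.attach,
        MvPolynomial.coeff m.1 f * φ v ⟨m.1, hdeg m.1 m.2⟩ := by
    intro v
    conv_lhs => rw [f.as_sum]
    rw [map_sum, ← Finset.sum_attach f.support
      fun m => MvPolynomial.eval (fun i => v i) (MvPolynomial.monomial m (MvPolynomial.coeff m f))]
    exact Finset.sum_congr rfl fun m _ => by rw [MvPolynomial.eval_monomial]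
  calc ∫ v, MvPolynomial.eval (fun i => v i) f ∂μ
      = ∫ v, ∑ m ∈ f.support.attach,
          MvPolynomial.coeff m.1 f * φ v ⟨m.1, hdeg m.1 m.2⟩ ∂μ := by
        exact integral_congr_ae (Filter.Eventually.of_forall fun v => key v)
    _ = ∑ m ∈ f.support.attach,
          ∫ v, MvPolynomial.coeff m.1 f * φ v ⟨m.1, hdeg m.1 m.2⟩ ∂μ :=
        integral_finset_sum _ fun m _ => (hintm _).const_mul _
    _ = ∑ m ∈ f.support.attach,
          MvPolynomial.coeff m.1 f * ∑ i, (c * lam i) * φ (ζ i) ⟨m.1, hdeg m.1 m.2⟩ := by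
        refine Finset.sum_congr rfl fun m _ => ?_
        rw [integral_const_mul, hcoord]
    _ = ∑ i, (c * lam i) * ∑ m ∈ f.support.attach,
          MvPolynomial.coeff m.1 f * φ (ζ i) ⟨m.1, hdeg m.1 m.2⟩ := by
        simp_rw [Finset.mul_sum]
        rw [Finset.sum_comm]
        exact Finset.sum_congr rfl fun i _ => Finset.sum_congr rfl fun m _ => by ring
    _ = ∑ i, (c * lam i) * MvPolynomial.eval (fun j => ζ i j) f := by
        exact Finset.sum_congr rfl fun i _ => by rw [key (ζ i)]
    _ = ∑ k, (c * lam (e k)) * MvPolynomial.eval (fun j => ζ (e k) j) f :=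
        (Equiv.sum_comp e fun i => (c * lam i) * MvPolynomial.eval (fun j => ζ i j) f).symm
end

section
/- Let Z ⊂ ℝ^q be compact, let μ be a finite positive Borel measure supported on Z, let r ∈ ℕ, and let y_α = ∫ z^α dμ for each multi-index α ∈ ℕ^q with |α| ≤ 2r. Then for every λ > 0 there exists ε > 0 such that for every finite ε-net Z_ε of Z there exists a positive measure μ̃ supported on the finite set Z_ε (i.e., a finite nonnegative combination of Dirac measures at points of Z_ε) satisfying |y_α − ∫ z^α dμ̃| ≤ λ for all multi-indices α with |α| ≤ 2r. In particular, the optimal value λ_ε* of the linear program minimizing λ subject to |y_α − ⟨z^α, μ̃⟩| ≤ λ for all |α| ≤ 2r over positive measures μ̃ on Z_ε tends to 0 as ε → 0. -/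
open MeasureTheory Set

/-- Let `μ` be a finite positive Borel measure supported on a
compact set `Z ⊂ ℝ^q` with moments `y_α = ∫ z^α dμ` for `|α| ≤ 2r`. For every
`λ > 0` there is `ε > 0` such that on every finite `ε`-net `Z_ε ⊆ Z` of `Z`
there is a positive atomic measure (a nonnegative combination of Diracs at
points of `Z_ε`, described by its weights `w`) whose moments of total degree at
most `2r` differ from those of `μ` by at most `λ`. In particular the optimal
value `λ_ε*` of the corresponding LP tends to `0` as `ε → 0`. -/
theorem stmt5 {q : ℕ} (Z : Set (EuclideanSpace ℝ (Fin q))) (hZ : IsCompact Z)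
    (μ : Measure (EuclideanSpace ℝ (Fin q))) [IsFiniteMeasure μ]
    (hsupp : μ Zᶜ = 0) (r : ℕ) :
    ∀ lam : ℝ, 0 < lam → ∃ ε : ℝ, 0 < ε ∧
      ∀ S : Finset (EuclideanSpace ℝ (Fin q)), (↑S : Set (EuclideanSpace ℝ (Fin q))) ⊆ Z →
        (∀ z ∈ Z, ∃ s ∈ S, dist z s ≤ ε) →
        ∃ w : EuclideanSpace ℝ (Fin q) → ℝ, (∀ s, 0 ≤ w s) ∧
          ∀ α : Fin q → ℕ, (∑ i, α i) ≤ 2 * r →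
            |(∫ z, ∏ i, (z i : ℝ) ^ (α i) ∂μ) -
              ∑ s ∈ S, w s * ∏ i, (s i) ^ (α i)| ≤ lam := by
  classical
  intro lam hlam
  set M : ℝ := (μ Set.univ).toReal with hM
  have hM0 : 0 ≤ M := ENNReal.toReal_nonneg
  set δ : ℝ := lam / (M + 1) with hδ
  have hδ0 : 0 < δ := div_pos hlam (by linarith)
  set m : (Fin q → ℕ) → EuclideanSpace ℝ (Fin q) → ℝ :=
    fun α z => ∏ i, (z i) ^ (α i) with hmdef
  have hmcont : ∀ α, Continuous (m α) := by
    intro α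
    apply continuous_finset_prod
    intro i _
    exact ((continuous_apply i).comp (PiLp.continuous_ofLp 2 _)).pow _
  set A : Finset (Fin q → ℕ) :=
    (Fintype.piFinset fun _ => Finset.range (2*r+1)).filter (fun α => ∑ i, α i ≤ 2*r) with hA
  have hAmem : ∀ α : Fin q → ℕ, (∑ i, α i) ≤ 2*r → α ∈ A := by
    intro α hα
    refine Finset.mem_filter.mpr ⟨Fintype.mem_piFinset.mpr fun i => ?_, hα⟩
    refine Finset.mem_range.mpr (Nat.lt_succ_of_le (le_trans ?_ hα))
    exact Finset.single_le_sum (fun j _ => Nat.zero_le _) (Finset.mem_univ i)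
  have hAne : A.Nonempty := ⟨fun _ => 0, hAmem _ (by simp)⟩
  have key : ∀ α ∈ A, ∃ e : ℝ, 0 < e ∧
      ∀ x ∈ Z, ∀ y ∈ Z, dist x y < e → dist (m α x) (m α y) < δ := by
    intro α _
    have hu := hZ.uniformContinuousOn_of_continuous (hmcont α).continuousOn
    rcases Metric.uniformContinuousOn_iff.mp hu δ hδ0 with ⟨e, he, H⟩
    exact ⟨e, he, fun x hx y hy h => H x hx y hy h⟩
  choose! E hE0 hE using key
  have hinf : 0 < A.inf' hAne E := (Finset.lt_inf'_iff _).mpr fun b hb => hE0 b hb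
  set ε : ℝ := A.inf' hAne E / 2 with hε
  refine ⟨ε, half_pos hinf, ?_⟩
  intro S hSZ hnet
  set n := S.card with hn
  set p : Fin n → EuclideanSpace ℝ (Fin q) := fun i => ((S.equivFin.symm i : S) : _) with hp
  have hpS : ∀ i, p i ∈ S := fun i => (S.equivFin.symm i).2
  have hpZ : ∀ i, p i ∈ Z := fun i => hSZ (hpS i)
  set C : Fin n → Set (EuclideanSpace ℝ (Fin q)) := fun i =>
    (Z ∩ Metric.closedBall (p i) ε) ∩
      ⋂ j : Fin n, ⋂ _ : j < i, (Metric.closedBall (p j) ε)ᶜ with hC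
  have hCmeas : ∀ i, MeasurableSet (C i) := by
    intro i
    exact (hZ.isClosed.measurableSet.inter measurableSet_closedBall).inter
      (MeasurableSet.iInter fun j => MeasurableSet.iInter fun _ =>
        measurableSet_closedBall.compl)
  have hCZ : ∀ i, C i ⊆ Z := fun i x hx => hx.1.1
  have hCdist : ∀ i, ∀ z ∈ C i, dist z (p i) ≤ ε := fun i z hz => hz.1.2
  have hdisj : Pairwise (Function.onFun Disjoint C) := by
    intro i j hij
    rw [Function.onFun, Set.disjoint_left]
    intro x hxi hxj
    rcases lt_or_gt_of_ne hij with h | h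
    · exact (Set.mem_iInter.mp (Set.mem_iInter.mp hxj.2 i) h) hxi.1.2
    · exact (Set.mem_iInter.mp (Set.mem_iInter.mp hxi.2 j) h) hxj.1.2
  have hcover : Z = ⋃ i, C i := by
    apply Set.Subset.antisymm
    · intro z hz
      obtain ⟨s, hsS, hds⟩ := hnet z hz
      have hne : (Finset.univ.filter fun i => dist z (p i) ≤ ε).Nonempty := by
        refine ⟨S.equivFin ⟨s, hsS⟩, Finset.mem_filter.mpr ⟨Finset.mem_univ _, ?_⟩⟩
        have hps : p (S.equivFin ⟨s, hsS⟩) = s := by simp [hp]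
        rwa [hps]
      obtain ⟨i, hi, hmin⟩ := Finset.exists_min_image _ id hne
      rw [Finset.mem_filter] at hi
      refine Set.mem_iUnion.mpr ⟨i, ⟨⟨hz, Metric.mem_closedBall.mpr hi.2⟩, ?_⟩⟩
      refine Set.mem_iInter.mpr fun j => Set.mem_iInter.mpr fun hji => fun hball => ?_
      have := hmin j (Finset.mem_filter.mpr ⟨Finset.mem_univ _, Metric.mem_closedBall.mp hball⟩)
      exact absurd hji (not_lt.mpr this)
    · exact Set.iUnion_subset hCZ
  set w : EuclideanSpace ℝ (Fin q) → ℝ := fun s =>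
    if h : s ∈ S then (μ (C (S.equivFin ⟨s, h⟩))).toReal else 0 with hw
  have hw0 : ∀ s, 0 ≤ w s := by
    intro s
    rw [hw]
    dsimp only
    split
    · exact ENNReal.toReal_nonneg
    · exact le_refl 0
  have hwp : ∀ i, w (p i) = (μ (C i)).toReal := by
    intro i
    rw [hw]
    dsimp only
    rw [dif_pos (hpS i)]
    congr 1
    have : (⟨p i, hpS i⟩ : S) = S.equivFin.symm i := Subtype.ext rfl
    rw [this, Equiv.apply_symm_apply]
  refine ⟨w, hw0, ?_⟩
  intro α hα
  have hαA := hAmem α hα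
  have hεE : ε < E α := lt_of_lt_of_le (half_lt_self hinf) (Finset.inf'_le _ hαA)
  -- rewrite the sum
  have hsum : ∑ s ∈ S, w s * m α s = ∑ i : Fin n, (μ (C i)).toReal * m α (p i) := by
    rw [← Finset.sum_coe_sort S (fun s => w s * m α s)]
    rw [← Equiv.sum_comp S.equivFin.symm (fun x : S => w (x : _) * m α (x : _))]
    exact Finset.sum_congr rfl fun i _ => by rw [show ((S.equivFin.symm i : S) : _) = p i from rfl, hwp]
  -- rewrite the integral
  have hrest : μ.restrict Z = μ := by
    refine Measure.restrict_eq_self_of_ae_mem ?_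
    rw [ae_iff]
    exact hsupp
  have hIZ : IntegrableOn (m α) Z μ := (hmcont α).continuousOn.integrableOn_compact hZ
  have hIU : IntegrableOn (m α) (⋃ i, C i) μ := by rw [← hcover]; exact hIZ
  have hint : ∫ z, m α z ∂μ = ∑ i : Fin n, ∫ z in C i, m α z ∂μ := by
    conv_lhs => rw [← hrest]
    rw [show Z = ⋃ i, C i from hcover, integral_iUnion hCmeas hdisj hIU, tsum_fintype]
  have hterm : ∀ i : Fin n,
      |(∫ z in C i, m α z ∂μ) - (μ (C i)).toReal * m α (p i)| ≤ δ * (μ (C i)).toReal := by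
    intro i
    have hIC : IntegrableOn (m α) (C i) μ := hIZ.mono_set (hCZ i)
    have h1 : (∫ z in C i, m α z ∂μ) - (μ (C i)).toReal * m α (p i)
        = ∫ z in C i, (m α z - m α (p i)) ∂μ := by
      rw [integral_sub hIC (integrableOn_const (measure_lt_top _ _).ne),
        setIntegral_const, smul_eq_mul, Measure.real]
    rw [h1]
    have hb : ∀ z ∈ C i, ‖m α z - m α (p i)‖ ≤ δ := by
      intro z hz
      have hd : dist z (p i) < E α := lt_of_le_of_lt (hCdist i z hz) hεE
      have := hE α hαA z (hCZ i hz) (p i) (hpZ i) hd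
      rw [Real.dist_eq] at this
      exact le_of_lt this
    have := norm_setIntegral_le_of_norm_le_const (measure_lt_top μ (C i)) hb
    simpa [Measure.real] using this
  have hsumle : ∑ i : Fin n, (μ (C i)).toReal ≤ M := by
    rw [← ENNReal.toReal_sum (fun i _ => (measure_lt_top μ (C i)).ne)]
    refine ENNReal.toReal_mono (measure_ne_top μ _) ?_
    rw [← tsum_fintype (L := SummationFilter.unconditional _), ← measure_iUnion hdisj hCmeas]
    exact measure_mono (Set.subset_univ _)
  calc |(∫ z, m α z ∂μ) - ∑ s ∈ S, w s * m α s|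
      = |∑ i : Fin n, ((∫ z in C i, m α z ∂μ) - (μ (C i)).toReal * m α (p i))| := by
        rw [hint, hsum, Finset.sum_sub_distrib]
    _ ≤ ∑ i : Fin n, |(∫ z in C i, m α z ∂μ) - (μ (C i)).toReal * m α (p i)| :=
        Finset.abs_sum_le_sum_abs _ _
    _ ≤ ∑ i : Fin n, δ * (μ (C i)).toReal := Finset.sum_le_sum fun i _ => hterm i
    _ = δ * ∑ i : Fin n, (μ (C i)).toReal := by rw [Finset.mul_sum]
    _ ≤ δ * M := by
        apply mul_le_mul_of_nonneg_left hsumle (le_of_lt hδ0)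
    _ ≤ lam := by
        rw [hδ, div_mul_eq_mul_div, div_le_iff₀ (by linarith)]
        nlinarith
end
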